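/- Let A ∈ ℂ^{m×N} with rank(A) ≥ 1 and m < N, with norm-induced metrics on ℂ^N and ℂ^m. Let δ ≤ 1/5. There exists a finite set M₁ ⊂ ℂ^N contained in the closed unit ball and a subset T ⊂ M₁ such that: (a) the optimality constant c_opt(A, M₁) := inf over all maps φ : A(M₁) → ℂ^N of sup_{x ∈ M₁} ‖φ(Ax) − x‖ satisfies c_opt(A, M₁) ≤ 1/4; but (b) every map Ψ : A(M₁) → ℂ^N satisfying ‖Ψ(Ax) − x‖ ≤ δ for all x ∈ T satisfies sup_{x ∈ M₁} ‖Ψ(Ax) − x‖ ≥ 3/10. In particular, no map performing δ-well on the training set T is an optimal map for (A, M₁). -/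

import Mathlib

open Matrix

theorem stmt7 {m N : ℕ} (hmN : m < N)
    (A : Matrix (Fin m) (Fin N) ℂ) (hrank : 1 ≤ A.rank)
    -- `n1` is an arbitrary norm on `ℂ^N`
    (n1 : EuclideanSpace ℂ (Fin N) → ℝ)
    (hn1_tri : ∀ a b, n1 (a + b) ≤ n1 a + n1 b)
    (hn1_smul : ∀ (c : ℂ) a, n1 (c • a) = ‖c‖ * n1 a)
    (hn1_eq : ∀ a, n1 a = 0 ↔ a = 0)
    (δ : ℝ) (hδ : δ ≤ 1 / 5) :
    ∃ M₁ T : Set (EuclideanSpace ℂ (Fin N)),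
      M₁.Finite ∧ T ⊆ M₁ ∧
      -- `M₁` is contained in the closed unit ball
      (∀ x ∈ M₁, n1 x ≤ 1) ∧
      -- (a) the optimality constant satisfies `c_opt(A, M₁) ≤ 1/4`
      (∃ φ : EuclideanSpace ℂ (Fin m) → EuclideanSpace ℂ (Fin N),
        ∀ x ∈ M₁, n1 (φ (Matrix.toEuclideanLin A x) - x) ≤ 1 / 4) ∧
      -- (b) any map performing `δ`-well on the training set `T` makes error `≥ 3/10` on `M₁`
      (∀ Ψ : EuclideanSpace ℂ (Fin m) → EuclideanSpace ℂ (Fin N),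
        (∀ x ∈ T, n1 (Ψ (Matrix.toEuclideanLin A x) - x) ≤ δ) →
        ∃ x ∈ M₁, 3 / 10 ≤ n1 (Ψ (Matrix.toEuclideanLin A x) - x)) := by
  set f := Matrix.toEuclideanLin A with hf
  -- basic properties of n1
  have hzero : n1 0 = 0 := (hn1_eq 0).mpr rfl
  have hneg : ∀ a, n1 (-a) = n1 a := by
    intro a
    have := hn1_smul (-1) a
    simpa using this
  have hnonneg : ∀ a, 0 ≤ n1 a := by
    intro a
    have h := hn1_tri a (-a)
    simp [hneg, hzero] at h
    linarith
  -- find a nonzero kernel element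
  have hninj : ¬ Function.Injective f := by
    intro hinj
    have h1 : Module.finrank ℂ (EuclideanSpace ℂ (Fin N)) ≤
        Module.finrank ℂ (EuclideanSpace ℂ (Fin m)) :=
      LinearMap.finrank_le_finrank_of_injective hinj
    simp [finrank_euclideanSpace_fin] at h1
    omega
  have hker : ∃ z : EuclideanSpace ℂ (Fin N), z ≠ 0 ∧ f z = 0 := by
    rw [Function.not_injective_iff] at hninj
    obtain ⟨x, y, hxy, hne⟩ := hninj
    exact ⟨x - y, sub_ne_zero.mpr hne, by simp [map_sub, hxy]⟩
  obtain ⟨z₀, hz₀ne, hz₀ker⟩ := hker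
  have hz₀pos : 0 < n1 z₀ := by
    rcases lt_or_eq_of_le (hnonneg z₀) with h | h
    · exact h
    · exact absurd ((hn1_eq z₀).mp h.symm) hz₀ne
  set z₁ : EuclideanSpace ℂ (Fin N) := ((1 / (2 * n1 z₀) : ℝ) : ℂ) • z₀ with hz₁
  have hc : ∀ r : ℝ, 0 < r → ‖((r : ℝ) : ℂ)‖ = r := by
    intro r hr
    rw [Complex.norm_real, Real.norm_eq_abs, abs_of_pos hr]
  have hz₁norm : n1 z₁ = 1 / 2 := by
    rw [hz₁, hn1_smul, hc _ (by positivity)]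
    field_simp
  have hz₁ker : f z₁ = 0 := by rw [hz₁, LinearMap.map_smul, hz₀ker, smul_zero]
  refine ⟨{0, z₁}, {0}, (Set.finite_singleton z₁).insert 0, by simp, ?_, ?_, ?_⟩
  · intro x hx
    rcases hx with h | h
    · simp [h, hzero]
    · simp only [Set.mem_singleton_iff] at h
      rw [h, hz₁norm]; norm_num
  · refine ⟨fun _ => ((1 / 2 : ℝ) : ℂ) • z₁, ?_⟩
    intro x hx
    rcases hx with h | h
    · subst h
      have : (((1 / 2 : ℝ) : ℂ) • z₁ - 0) = ((1 / 2 : ℝ) : ℂ) • z₁ := by simp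
      rw [this, hn1_smul, hc _ (by norm_num), hz₁norm]
      norm_num
    · simp only [Set.mem_singleton_iff] at h
      subst h
      have heq : (((1 / 2 : ℝ) : ℂ) • z₁ - z₁) = -(((1 / 2 : ℝ) : ℂ) • z₁) := by
        push_cast
        module
      rw [heq, hneg, hn1_smul, hc _ (by norm_num), hz₁norm]
      norm_num
  · intro Ψ hΨ
    have h0 : n1 (Ψ (f 0) - 0) ≤ δ := hΨ 0 rfl
    have hδ0 : 0 ≤ δ := le_trans (hnonneg _) h0
    refine ⟨z₁, by simp, ?_⟩
    have hAz : f z₁ = f 0 := by rw [hz₁ker, map_zero]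
    rw [hAz]
    have htri := hn1_tri (z₁ - Ψ (f 0)) (Ψ (f 0) - 0)
    simp only [sub_add_sub_cancel] at htri
    have h1 : n1 (z₁ - 0) = 1 / 2 := by simpa using hz₁norm
    rw [h1] at htri
    have h2 : n1 (z₁ - Ψ (f 0)) = n1 (Ψ (f 0) - z₁) := by
      rw [← hneg (z₁ - Ψ (f 0)), neg_sub]
    rw [h2] at htri
    linarith [htri, h0, hδ]
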